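/- For a quotient Cayley graph H_m of H (same generating set, more relators), every SAW in H of length less than the relative girth of H_m with respect to H projects to a SAW in H_m, and conversely; hence c_n(H_m) = c_n(H) and b_n(H_m) = b_n(H) for all n < g̃_m − 1 in particular b_{g̃_m − 1}^{(m)} = b_{g̃_m − 1}. -/

import Mathlib

open Filter
open scoped Classical

variable {Γ : Type*} [Group Γ]

/-- The Cayley graph of a group with (not necessarily symmetric) generating set `S`. -/
def cayley (S : Set Γ) : SimpleGraph Γ where
  Adj x y := x ≠ y ∧ (x⁻¹ * y ∈ S ∨ y⁻¹ * x ∈ S)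
  symm := ⟨fun x y h => ⟨h.1.symm, h.2.symm⟩⟩
  loopless := ⟨fun x h => h.1 rfl⟩

/-- The antisymmetric edge weight attached to the distinguished generator `s₁`. -/
noncomputable def wt (s₁ : Γ) (x y : Γ) : ℤ :=
  if x⁻¹ * y = s₁ then 1 else if x⁻¹ * y = s₁⁻¹ then -1 else 0

/-- An `n`-step walk from the identity in the Cayley graph, frozen after time `n`. -/
def IsWalkFrom (S : Set Γ) (n : ℕ) (ω : ℕ → Γ) : Prop :=
  ω 0 = 1 ∧ (∀ i < n, (cayley S).Adj (ω i) (ω (i+1))) ∧ ∀ i, n ≤ i → ω i = ω n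

/-- An `n`-step self-avoiding walk from the identity. -/
def IsSAWFrom (S : Set Γ) (n : ℕ) (ω : ℕ → Γ) : Prop :=
  IsWalkFrom S n ω ∧ ∀ i ≤ n, ∀ j ≤ n, ω i = ω j → i = j

/-- The number of `n`-step self-avoiding walks from a fixed vertex. -/
noncomputable def sawCount (S : Set Γ) (n : ℕ) : ℕ :=
  Nat.card {ω : ℕ → Γ // IsSAWFrom S n ω}

/-- The height of step `s` of a walk, via the `±1` weight on `s₁`-edges. -/
noncomputable def height (s₁ : Γ) (ω : ℕ → Γ) (s : ℕ) : ℤ :=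
  ∑ i ∈ Finset.range s, wt s₁ (ω i) (ω (i+1))

/-- An `n`-step bridge: `h_0 < h_s ≤ h_n` for `1 ≤ s ≤ n`. -/
noncomputable def IsBridge (S : Set Γ) (s₁ : Γ) (n : ℕ) (ω : ℕ → Γ) : Prop :=
  IsSAWFrom S n ω ∧ ∀ s, 1 ≤ s → s ≤ n →
    0 < height s₁ ω s ∧ height s₁ ω s ≤ height s₁ ω n

/-- The number of `n`-step bridges from a fixed vertex. -/
noncomputable def bridgeCount (S : Set Γ) (s₁ : Γ) (n : ℕ) : ℕ :=
  Nat.card {ω : ℕ → Γ // IsBridge S s₁ n ω}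

/-- An `n`-step half-space walk: `h_0 < h_s` for `1 ≤ s ≤ n`. -/
def IsHalfSpace (S : Set Γ) (s₁ : Γ) (n : ℕ) (ω : ℕ → Γ) : Prop :=
  IsSAWFrom S n ω ∧ ∀ s, 1 ≤ s → s ≤ n → 0 < height s₁ ω s

/-- The number of `n`-step half-space walks from a fixed vertex. -/
noncomputable def hswCount (S : Set Γ) (s₁ : Γ) (n : ℕ) : ℕ :=
  Nat.card {ω : ℕ → Γ // IsHalfSpace S s₁ n ω}

/-- The span of an `n`-step walk: `max_s h_s - min_s h_s`. -/
noncomputable def wspan (s₁ : Γ) (n : ℕ) (ω : ℕ → Γ) : ℤ :=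
  ((Finset.range (n+1)).sup' Finset.nonempty_range_add_one (height s₁ ω)) -
    ((Finset.range (n+1)).inf' Finset.nonempty_range_add_one (height s₁ ω))

/-- The number of `n`-step bridges of span `A` from a fixed vertex. -/
noncomputable def bridgeSpanCount (S : Set Γ) (s₁ : Γ) (n A : ℕ) : ℕ :=
  Nat.card {ω : ℕ → Γ // IsBridge S s₁ n ω ∧ wspan s₁ n ω = A}

/-- `s₁` is a generator of infinite order, independent (free) from the remaining
generators: the group is the free product of `⟨s₁⟩` and the subgroup generated
by the other generators. -/
def IsIndepGen (S : Set Γ) (s₁ : Γ) : Prop :=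
  s₁ ∈ S ∧ ¬ IsOfFinOrder s₁ ∧
  Function.Bijective
    (Monoid.Coprod.lift (Subgroup.closure (S \ {s₁, s₁⁻¹})).subtype
      (Subgroup.zpowers s₁).subtype)

/-- The connective constant of the Cayley graph of `(Γ, S)`, as `inf_n c_n^(1/n)`. -/
noncomputable def connConst (S : Set Γ) : ℝ :=
  ⨅ n : {n : ℕ // 0 < n}, (sawCount S n.1 : ℝ) ^ (1 / (n.1 : ℝ))

/-- The number of partitions of `n` into distinct parts. -/
def PD (n : ℕ) : ℕ := (Nat.Partition.distincts n).card

/-- The relative girth of the quotient Cayley graph (via `π`) with respect to the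
Cayley graph of `(Γ, S)`: the minimal length of a word over `S ∪ S⁻¹` which is a
cycle in the quotient (trivial under `π`) but not in `Γ` (nontrivial in `Γ`);
`⊤` if there is none. -/
noncomputable def relGirth {Γ Γ' : Type*} [Group Γ] [Group Γ']
    (π : Γ →* Γ') (S : Set Γ) : ℕ∞ :=
  sInf {m : ℕ∞ | ∃ (k : ℕ) (f : Fin k → Γ), m = (k : ℕ∞) ∧
    (∀ i, f i ∈ S ∪ S⁻¹) ∧ (List.ofFn f).prod ≠ 1 ∧ π (List.ofFn f).prod = 1}

section Aux

variable {Γ' : Type*} [Group Γ']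

lemma relGirth_word_trivial (π : Γ →* Γ') (S : Set Γ) {k : ℕ}
    (hk : (k : ℕ∞) < relGirth π S) (f : Fin k → Γ)
    (hf : ∀ i, f i ∈ S ∪ S⁻¹) (hone : π (List.ofFn f).prod = 1) :
    (List.ofFn f).prod = 1 := by
  by_contra h
  exact absurd (sInf_le ⟨k, f, rfl, hf, h, hone⟩ : relGirth π S ≤ (k : ℕ∞))
    (not_le.2 hk)

lemma inv_mem_SS {S : Set Γ} {a : Γ} (h : a ∈ S ∪ S⁻¹) : a⁻¹ ∈ S ∪ S⁻¹ := by
  rcases h with h | h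
  · exact Or.inr (by simpa using h)
  · exact Or.inl (by simpa using h)

lemma step_mem {S : Set Γ} {x y : Γ} (h : (cayley S).Adj x y) :
    x⁻¹ * y ∈ S ∪ S⁻¹ := by
  rcases h.2 with h | h
  · exact Or.inl h
  · exact Or.inr (by simpa [mul_inv_rev] using h)

lemma two_letter {π : Γ →* Γ'} {S : Set Γ} (h2 : (2 : ℕ∞) < relGirth π S)
    {a b : Γ} (ha : a ∈ S ∪ S⁻¹) (hb : b ∈ S ∪ S⁻¹) (h : π (a * b) = 1) :
    a * b = 1 := by
  have := relGirth_word_trivial π S (k := 2) h2 ![a, b]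
    (by intro i; fin_cases i <;> assumption) (by simpa using h)
  simpa using this

lemma prod_steps (ω : ℕ → Γ) (i : ℕ) : ∀ k,
    (List.ofFn (fun t : Fin k => (ω (i + t))⁻¹ * ω (i + t + 1))).prod
      = (ω i)⁻¹ * ω (i + k) := by
  intro k
  induction k with
  | zero => simp
  | succ k ih =>
    rw [List.ofFn_succ', List.concat_eq_append, List.prod_append]
    simp only [Fin.coe_castSucc, Fin.val_last, List.prod_cons, List.prod_nil,
      mul_one]
    rw [ih, mul_assoc, mul_inv_cancel_left, ← Nat.add_assoc]

lemma walk_inj_of_lt {π : Γ →* Γ'} {S : Set Γ} {n : ℕ}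
    (hlt : (n : ℕ∞) < relGirth π S) {ω : ℕ → Γ}
    (hw : ∀ i < n, (cayley S).Adj (ω i) (ω (i+1)))
    {i j : ℕ} (hij : i ≤ j) (hj : j ≤ n) (h : π (ω i) = π (ω j)) :
    ω i = ω j := by
  set k := j - i with hk
  have hik : i + k = j := by omega
  have hπ : π ((ω i)⁻¹ * ω j) = 1 := by
    rw [map_mul, map_inv, h, inv_mul_cancel]
  have hkey := relGirth_word_trivial π S
    (lt_of_le_of_lt (show (k : ℕ∞) ≤ (n : ℕ∞) by exact_mod_cast (by omega : k ≤ n)) hlt)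
    (fun t : Fin k => (ω (i + t))⁻¹ * ω (i + t + 1))
    (fun t => step_mem (hw (i + t) (by have := t.2; omega)))
    (by rw [prod_steps, hik]; exact hπ)
  rw [prod_steps, hik] at hkey
  exact (inv_mul_eq_one.1 hkey)

lemma saw_proj {π : Γ →* Γ'} {S : Set Γ} {n : ℕ}
    (hlt : (n : ℕ∞) < relGirth π S) {ω : ℕ → Γ} (h : IsSAWFrom S n ω) :
    IsSAWFrom (π '' S) n (π ∘ ω) := by
  obtain ⟨⟨h0, hadj, hfr⟩, hinj⟩ := h
  refine ⟨⟨by simp [Function.comp, h0], ?_, fun i hi => by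
    simp only [Function.comp]; rw [hfr i hi]⟩, ?_⟩
  · intro i hi
    have hA := hadj i hi
    refine ⟨?_, ?_⟩
    · intro he
      exact hA.1 (walk_inj_of_lt hlt hadj (Nat.le_succ i) hi he)
    · have hstep := step_mem hA
      rcases hstep with hs | hs
      · exact Or.inl ⟨_, hs, by rw [map_mul, map_inv]; rfl⟩
      · refine Or.inr ⟨((ω i)⁻¹ * ω (i+1))⁻¹, by simpa using hs, ?_⟩
        rw [map_inv, map_mul, map_inv]
        simp [mul_inv_rev]
  · intro i hi j hj heq
    rcases le_total i j with hij | hij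
    · exact hinj i hi j hj (walk_inj_of_lt hlt hadj hij hj heq)
    · exact (hinj j hj i hi (walk_inj_of_lt hlt hadj hij hi heq.symm)).symm

lemma proj_injective {π : Γ →* Γ'} {S : Set Γ} {n : ℕ}
    (hlt : (n : ℕ∞) + 1 < relGirth π S) {ω ω' : ℕ → Γ}
    (h : IsSAWFrom S n ω) (h' : IsSAWFrom S n ω')
    (he : π ∘ ω = π ∘ ω') : ω = ω' := by
  obtain ⟨⟨h0, hadj, hfr⟩, _⟩ := h
  obtain ⟨⟨h0', hadj', hfr'⟩, _⟩ := h'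
  have key : ∀ i, i ≤ n → ω i = ω' i := by
    intro i
    induction i with
    | zero => intro _; rw [h0, h0']
    | succ i ih =>
      intro hin
      have hi : i < n := hin
      have hwi : ω i = ω' i := ih (le_of_lt hi)
      have h2 : (2 : ℕ∞) < relGirth π S :=
        lt_of_le_of_lt (by exact_mod_cast (show 2 ≤ n + 1 by omega)) hlt
      set a := (ω i)⁻¹ * ω (i+1) with hadef
      set b := (ω' i)⁻¹ * ω' (i+1) with hbdef
      have ha := step_mem (hadj i hi)
      have hb := step_mem (hadj' i hi)
      have h1e : π (ω i) = π (ω' i) := congrFun he i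
      have h2e : π (ω (i+1)) = π (ω' (i+1)) := congrFun he (i+1)
      have hπab : π (a⁻¹ * b) = 1 := by
        simp only [hadef, hbdef, mul_inv_rev, inv_inv, map_mul, map_inv, h1e, h2e]
        group
      have hab : a = b := inv_mul_eq_one.1 (two_letter h2 (inv_mem_SS ha) hb hπab)
      calc ω (i+1) = ω i * a := by rw [hadef, mul_inv_cancel_left]
        _ = ω' i * b := by rw [hwi, hab]
        _ = ω' (i+1) := by rw [hbdef, mul_inv_cancel_left]
  funext i
  by_cases hin : i ≤ n
  · exact key i hin
  · rw [hfr i (le_of_not_ge hin), hfr' i (le_of_not_ge hin), key n le_rfl]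

lemma proj_surj {π : Γ →* Γ'} {S : Set Γ} {n : ℕ} {ω' : ℕ → Γ'}
    (h' : IsSAWFrom (π '' S) n ω') :
    ∃ ω : ℕ → Γ, IsSAWFrom S n ω ∧ π ∘ ω = ω' := by
  obtain ⟨⟨h0, hadj, hfr⟩, hinj⟩ := h'
  have hstep : ∀ i, i < n → ∃ s : Γ, s ∈ S ∪ S⁻¹ ∧ π s = (ω' i)⁻¹ * ω' (i+1) := by
    intro i hi
    rcases (hadj i hi).2 with h | h
    · obtain ⟨a, ha, hpa⟩ := h
      exact ⟨a, Or.inl ha, hpa⟩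
    · obtain ⟨a, ha, hpa⟩ := h
      exact ⟨a⁻¹, Or.inr (by simpa using ha),
        by rw [map_inv, hpa, mul_inv_rev, inv_inv]⟩
  classical
  set g : ℕ → Γ := fun i => if h : i < n then (hstep i h).choose else 1 with hgdef
  have hgmem : ∀ i, i < n → g i ∈ S ∪ S⁻¹ := by
    intro i hi; rw [hgdef]; simp only [dif_pos hi]; exact (hstep i hi).choose_spec.1
  have hgπ : ∀ i, i < n → π (g i) = (ω' i)⁻¹ * ω' (i+1) := by
    intro i hi; rw [hgdef]; simp only [dif_pos hi]; exact (hstep i hi).choose_spec.2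
  set ω : ℕ → Γ := fun k => ((List.range (min k n)).map g).prod with hωdef
  have hω0 : ω 0 = 1 := by simp [hωdef]
  have hωstep : ∀ i, i < n → ω (i+1) = ω i * g i := by
    intro i hi
    have h1 : min (i+1) n = i + 1 := by omega
    have h2 : min i n = i := by omega
    rw [hωdef]; simp only [h1, h2, List.range_succ, List.map_append, List.prod_append]
    simp
  have hωfr : ∀ i, n ≤ i → ω i = ω n := by
    intro i hi
    have : min i n = min n n := by omega
    rw [hωdef]; simp only [this]
  have hπω : ∀ i, π (ω i) = ω' i := by
    intro i
    induction i with
    | zero => rw [hω0, map_one, h0]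
    | succ i ih =>
      by_cases hi : i < n
      · rw [hωstep i hi, map_mul, ih, hgπ i hi, mul_inv_cancel_left]
      · have hni : n ≤ i := le_of_not_gt hi
        rw [hωfr (i+1) (by omega), ← hωfr i hni, ih, hfr i hni,
          hfr (i+1) (by omega)]
  refine ⟨ω, ⟨⟨hω0, ?_, hωfr⟩, ?_⟩, funext hπω⟩
  · intro i hi
    refine ⟨?_, ?_⟩
    · intro he
      exact (hadj i hi).1 (by rw [← hπω i, ← hπω (i+1), he])
    · have hs : (ω i)⁻¹ * ω (i+1) = g i := by
        rw [hωstep i hi, inv_mul_cancel_left]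
      rcases hgmem i hi with h | h
      · exact Or.inl (by rw [hs]; exact h)
      · refine Or.inr ?_
        have : (ω (i+1))⁻¹ * ω i = (g i)⁻¹ := by
          rw [← hs, mul_inv_rev, inv_inv]
        rw [this]; simpa using h
  · intro i hi j hj heq
    exact hinj i hi j hj (by rw [← hπω i, ← hπω j, heq])

lemma wt_proj {π : Γ →* Γ'} {S : Set Γ} (h2 : (2 : ℕ∞) < relGirth π S)
    {s₁ : Γ} (hs₁ : s₁ ∈ S) {x y : Γ} (hxy : x⁻¹ * y ∈ S ∪ S⁻¹) :
    wt (π s₁) (π x) (π y) = wt s₁ x y := by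
  unfold wt
  have e : (π x)⁻¹ * π y = π (x⁻¹ * y) := by rw [map_mul, map_inv]
  have h1 : ((π x)⁻¹ * π y = π s₁) ↔ x⁻¹ * y = s₁ := by
    constructor
    · intro h
      have hπ1 : π ((x⁻¹ * y)⁻¹ * s₁) = 1 := by
        rw [map_mul, map_inv, ← e, h, inv_mul_cancel]
      exact (inv_mul_eq_one.1
        (two_letter h2 (inv_mem_SS hxy) (Or.inl hs₁) hπ1))
    · intro h; rw [e, h]
  have h2' : ((π x)⁻¹ * π y = (π s₁)⁻¹) ↔ x⁻¹ * y = s₁⁻¹ := by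
    constructor
    · intro h
      have hπ1 : π ((x⁻¹ * y)⁻¹ * s₁⁻¹) = 1 := by
        rw [map_mul, map_inv, map_inv, ← e, h, inv_mul_cancel]
      exact (inv_mul_eq_one.1
        (two_letter h2 (inv_mem_SS hxy) (Or.inr (by simpa using hs₁)) hπ1))
    · intro h; rw [e, h, map_inv]
  simp only [h1, h2']

lemma height_proj {π : Γ →* Γ'} {S : Set Γ} {n : ℕ} {s₁ : Γ}
    (hlt : (n : ℕ∞) + 1 < relGirth π S) (hs₁ : s₁ ∈ S) {ω : ℕ → Γ}
    (hadj : ∀ i < n, (cayley S).Adj (ω i) (ω (i+1)))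
    {s : ℕ} (hs : s ≤ n) : height (π s₁) (π ∘ ω) s = height s₁ ω s := by
  unfold height
  refine Finset.sum_congr rfl (fun i hi => ?_)
  have hi' : i < n := by have := Finset.mem_range.1 hi; omega
  have h2 : (2 : ℕ∞) < relGirth π S :=
    lt_of_le_of_lt (by exact_mod_cast (show 2 ≤ n + 1 by omega)) hlt
  exact wt_proj h2 hs₁ (step_mem (hadj i hi'))

end Aux

/-- for a quotient Cayley graph (same generating set, more relators),
every SAW of length `< g̃` projects to a SAW in the quotient, and for
`n < g̃ - 1` the SAW counts and bridge counts of the quotient agree with those of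
the original graph (in particular `b^{(m)}_{g̃-1} = b_{g̃-1}`). -/
theorem quotient_saw_counts_eq {Γ Γ' : Type*} [Group Γ] [Group Γ']
    [Infinite Γ] [Infinite Γ'] (S : Set Γ) (hSfin : S.Finite)
    (hgen : Subgroup.closure S = ⊤) (π : Γ →* Γ') (hπ : Function.Surjective π)
    (s₁ : Γ) (hs₁ : s₁ ∈ S) (hio : ¬ IsOfFinOrder s₁) (n : ℕ) :
    ((n : ℕ∞) < relGirth π S →
      ∀ ω : ℕ → Γ, IsSAWFrom S n ω → IsSAWFrom (π '' S) n (π ∘ ω)) ∧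
    ((n : ℕ∞) + 1 < relGirth π S →
      sawCount (π '' S) n = sawCount S n ∧
      bridgeCount (π '' S) (π s₁) n = bridgeCount S s₁ n) := by
  constructor
  · intro hlt ω hω
    exact saw_proj hlt hω
  · intro hlt
    have hltn : (n : ℕ∞) < relGirth π S :=
      lt_of_le_of_lt (le_self_add) hlt
    refine ⟨?_, ?_⟩
    · have e : {ω : ℕ → Γ // IsSAWFrom S n ω} ≃
          {ω' : ℕ → Γ' // IsSAWFrom (π '' S) n ω'} := by
        refine Equiv.ofBijective
          (fun ω => ⟨π ∘ ω.1, saw_proj hltn ω.2⟩) ⟨?_, ?_⟩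
        · intro a b hab
          exact Subtype.ext (proj_injective hlt a.2 b.2
            (congrArg Subtype.val hab))
        · intro ω'
          obtain ⟨ω, hω, he⟩ := proj_surj ω'.2
          exact ⟨⟨ω, hω⟩, Subtype.ext he⟩
      exact (Nat.card_congr e).symm
    · have eb : {ω : ℕ → Γ // IsBridge S s₁ n ω} ≃
          {ω' : ℕ → Γ' // IsBridge (π '' S) (π s₁) n ω'} := by
        refine Equiv.ofBijective (fun ω => ⟨π ∘ ω.1, ?_, ?_⟩) ⟨?_, ?_⟩
        · exact saw_proj hltn ω.2.1
        · intro s h1s hsn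
          rw [height_proj hlt hs₁ ω.2.1.1.2.1 hsn,
            height_proj hlt hs₁ ω.2.1.1.2.1 le_rfl]
          exact ω.2.2 s h1s hsn
        · intro a b hab
          exact Subtype.ext (proj_injective hlt a.2.1 b.2.1
            (congrArg Subtype.val hab))
        · rintro ⟨ω', hb', hh'⟩
          obtain ⟨ω, hω, he⟩ := proj_surj hb'
          refine ⟨⟨ω, hω, ?_⟩, Subtype.ext he⟩
          intro s h1s hsn
          have hcond := hh' s h1s hsn
          rw [← he, height_proj hlt hs₁ hω.1.2.1 hsn,
            height_proj hlt hs₁ hω.1.2.1 le_rfl] at hcond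
          exact hcond
      exact (Nat.card_congr eb).symm
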